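/- Let G be a finite simple connected graph of order n and size m with minimum degree δ ≥ 2. Then AG(G) ≤ (m/2)·(√((n−1)/2) + √(2/(n−1))), with equality if and only if G is isomorphic to the complete graph K₃. -/

import Mathlib

open SimpleGraph Real

lemma aux_key {s B : ℝ} (hs : 0 < s) (hB : 0 < B) :
    B + 1/B - (s + 1/s) = (B - s)*(s*B - 1)/(s*B) := by
  field_simp; ring

lemma aux_le {A t : ℝ} (hA : 1 ≤ A) (ht : 0 < t) (h1 : 1/A ≤ t) (h2 : t ≤ A) :
    sqrt t + sqrt (1/t) ≤ sqrt A + sqrt (1/A) := by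
  have hA0 : 0 < A := lt_of_lt_of_le one_pos hA
  have hs : 0 < sqrt t := Real.sqrt_pos.2 ht
  have hB : 0 < sqrt A := Real.sqrt_pos.2 hA0
  have hsB : sqrt t ≤ sqrt A := Real.sqrt_le_sqrt h2
  have e1 : sqrt (1/t) = 1 / sqrt t := by rw [one_div, Real.sqrt_inv, one_div]
  have e2 : sqrt (1/A) = 1 / sqrt A := by rw [one_div, Real.sqrt_inv, one_div]
  have h1' : 1 / sqrt A ≤ sqrt t := by rw [← e2]; exact Real.sqrt_le_sqrt h1
  rw [e1, e2]
  have key := aux_key hs hB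
  have h1'' : 1 ≤ sqrt t * sqrt A := by rwa [div_le_iff₀ hB] at h1'
  have h3 : 0 ≤ (sqrt A - sqrt t)*(sqrt t * sqrt A - 1)/(sqrt t * sqrt A) :=
    div_nonneg (mul_nonneg (by linarith) (by linarith)) (le_of_lt (mul_pos hs hB))
  linarith [key, h3]

lemma aux_eq {A t : ℝ} (hA : 1 ≤ A) (ht : 0 < t)
    (heq : sqrt t + sqrt (1/t) = sqrt A + sqrt (1/A)) : t = A ∨ t = 1/A := by
  have hA0 : 0 < A := lt_of_lt_of_le one_pos hA
  have hs : 0 < sqrt t := Real.sqrt_pos.2 ht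
  have hB : 0 < sqrt A := Real.sqrt_pos.2 hA0
  have e1 : sqrt (1/t) = 1 / sqrt t := by rw [one_div, Real.sqrt_inv, one_div]
  have e2 : sqrt (1/A) = 1 / sqrt A := by rw [one_div, Real.sqrt_inv, one_div]
  have key := aux_key hs hB
  rw [e1, e2] at heq
  have h0 : (sqrt A - sqrt t)*(sqrt t * sqrt A - 1)/(sqrt t * sqrt A) = 0 := by linarith
  have h0' : (sqrt A - sqrt t)*(sqrt t * sqrt A - 1) = 0 := by
    rcases div_eq_zero_iff.1 h0 with h | h
    · exact h
    · exact absurd h (by positivity)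
  rcases mul_eq_zero.1 h0' with h | h
  · left
    have hts : sqrt t = sqrt A := by linarith
    calc t = sqrt t ^ 2 := (Real.sq_sqrt ht.le).symm
    _ = sqrt A ^ 2 := by rw [hts]
    _ = A := Real.sq_sqrt hA0.le
  · right
    have hst : sqrt t = 1 / sqrt A := by field_simp; linarith
    calc t = sqrt t ^ 2 := (Real.sq_sqrt ht.le).symm
    _ = (1/sqrt A) ^ 2 := by rw [hst]
    _ = 1 / A := by rw [div_pow, one_pow, Real.sq_sqrt hA0.le]
noncomputable def ndeg {V : Type*} [Fintype V] (G : SimpleGraph V) (v : V) : ℕ :=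
  letI := Classical.decRel G.Adj
  G.degree v

/-- The degree of a vertex, as a real number. -/
noncomputable def deg {V : Type*} [Fintype V] (G : SimpleGraph V) (v : V) : ℝ :=
  (ndeg G v : ℝ)

/-- For a symmetric function `f`, `edgeSum G f = Σ_{uv ∈ E(G)} f (d_u) (d_v)`:
each unordered edge is counted twice in the double sum, hence the factor `1/2`. -/
noncomputable def edgeSum {V : Type*} [Fintype V] (G : SimpleGraph V) (f : ℝ → ℝ → ℝ) : ℝ :=
  letI := Classical.decRel G.Adj
  (1 / 2) * ∑ u : V, ∑ w : V, if G.Adj u w then f (deg G u) (deg G w) else 0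

/-- The arithmetic-geometric index `AG(G) = Σ_{uv ∈ E(G)} (1/2)(√(d_u/d_v) + √(d_v/d_u))`. -/
noncomputable def AG {V : Type*} [Fintype V] (G : SimpleGraph V) : ℝ :=
  edgeSum G (fun x y => (Real.sqrt (x / y) + Real.sqrt (y / x)) / 2)

/-- The first geometric-arithmetic index `GA(G) = Σ_{uv ∈ E(G)} 2√(d_u d_v)/(d_u + d_v)`. -/
noncomputable def GA {V : Type*} [Fintype V] (G : SimpleGraph V) : ℝ :=
  edgeSum G (fun x y => 2 * Real.sqrt (x * y) / (x + y))

/-- The forgotten index `F(G) = Σ_{uv ∈ E(G)} (d_u² + d_v²)`. -/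
noncomputable def forgottenIndex {V : Type*} [Fintype V] (G : SimpleGraph V) : ℝ :=
  edgeSum G (fun x y => x ^ 2 + y ^ 2)

/-- The first Zagreb index `M₁(G) = Σ_{uv ∈ E(G)} (d_u + d_v)`. -/
noncomputable def M1 {V : Type*} [Fintype V] (G : SimpleGraph V) : ℝ :=
  edgeSum G (fun x y => x + y)

/-- The second Zagreb index `M₂(G) = Σ_{uv ∈ E(G)} d_u d_v`. -/
noncomputable def M2 {V : Type*} [Fintype V] (G : SimpleGraph V) : ℝ :=
  edgeSum G (fun x y => x * y)

/-- The symmetric division deg index `SDD(G) = Σ_{uv ∈ E(G)} (d_u/d_v + d_v/d_u)`. -/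
noncomputable def SDD {V : Type*} [Fintype V] (G : SimpleGraph V) : ℝ :=
  edgeSum G (fun x y => x / y + y / x)

/-- The atom-bond connectivity index `ABC(G) = Σ_{uv ∈ E(G)} √((d_u + d_v − 2)/(d_u d_v))`. -/
noncomputable def ABC {V : Type*} [Fintype V] (G : SimpleGraph V) : ℝ :=
  edgeSum G (fun x y => Real.sqrt ((x + y - 2) / (x * y)))

/-- `G` is `(s,r)`-semiregular: its vertex set is the disjoint union of two nonempty sets,
all vertices of the first having degree `s` and all vertices of the second degree `r`. -/
def IsSemiregular {V : Type*} [Fintype V] (G : SimpleGraph V) (s r : ℕ) : Prop :=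
  ∃ V₁ V₂ : Set V, V₁.Nonempty ∧ V₂.Nonempty ∧ Disjoint V₁ V₂ ∧ V₁ ∪ V₂ = Set.univ ∧
    (∀ v ∈ V₁, ndeg G v = s) ∧ (∀ v ∈ V₂, ndeg G v = r)

set_option maxHeartbeats 1600000 in
/-- Corollary 3 of the paper. -/
theorem stmt5 {V : Type*} [Fintype V] (G : SimpleGraph V) (hG : G.Connected)
    (n m : ℕ)
    (hn : Fintype.card V = n) (hm : G.edgeSet.ncard = m)
    (hδ : ∀ v : V, 2 ≤ ndeg G v) :
    AG G ≤ ((m : ℝ) / 2) *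
      (Real.sqrt (((n : ℝ) - 1) / 2) + Real.sqrt (2 / ((n : ℝ) - 1))) ∧
    (AG G = ((m : ℝ) / 2) *
      (Real.sqrt (((n : ℝ) - 1) / 2) + Real.sqrt (2 / ((n : ℝ) - 1))) ↔
      Nonempty (G ≃g (⊤ : SimpleGraph (Fin 3)))) := by
  letI : DecidableRel G.Adj := Classical.decRel G.Adj
  letI : DecidableEq V := Classical.decEq V
  have hne : Nonempty V := hG.nonempty
  have hndeg : ∀ v, ndeg G v = G.degree v := fun v => rfl
  have hn3 : 3 ≤ n := by
    obtain ⟨v⟩ := hne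
    have h1 := hδ v
    have h2 : ndeg G v < n := by rw [← hn, hndeg]; exact G.degree_lt_card_verts v
    omega
  have hn1 : (0:ℝ) < (n:ℝ) - 1 := by
    have : (3:ℝ) ≤ (n:ℝ) := by exact_mod_cast hn3
    linarith
  obtain ⟨A, hAdef⟩ : ∃ A : ℝ, A = ((n:ℝ)-1)/2 := ⟨_, rfl⟩
  have hA : 1 ≤ A := by
    rw [hAdef]
    have : (3:ℝ) ≤ (n:ℝ) := by exact_mod_cast hn3
    linarith
  have hinv : 2 / ((n:ℝ)-1) = 1/A := by rw [hAdef, one_div_div]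
  rw [hinv, ← hAdef]
  -- degree bounds
  have hdl : ∀ v, (2:ℝ) ≤ deg G v := fun v => by
    have := hδ v; rw [deg]; exact_mod_cast this
  have hdu : ∀ v, deg G v ≤ (n:ℝ) - 1 := fun v => by
    have h2 : ndeg G v < n := by rw [← hn, hndeg]; exact G.degree_lt_card_verts v
    have h3 : (ndeg G v : ℝ) + 1 ≤ (n:ℝ) := by exact_mod_cast h2
    rw [deg]; linarith
  have hd0 : ∀ v, (0:ℝ) < deg G v := fun v => lt_of_lt_of_le two_pos (hdl v)
  -- ratio bounds
  have hrat : ∀ u w : V, 1/A ≤ deg G u / deg G w ∧ deg G u / deg G w ≤ A := by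
    intro u w
    constructor
    · rw [← hinv, div_le_div_iff₀ hn1 (hd0 w)]
      nlinarith [hdl u, hdu w, hd0 w]
    · rw [hAdef, div_le_div_iff₀ (hd0 w) two_pos]
      nlinarith [hdu u, hdl w, hd0 u]
  -- per-edge bound
  have hterm : ∀ u w : V,
      (Real.sqrt (deg G u / deg G w) + Real.sqrt (deg G w / deg G u)) / 2
        ≤ (Real.sqrt A + Real.sqrt (1/A)) / 2 := by
    intro u w
    have hwu : deg G w / deg G u = 1 / (deg G u / deg G w) := (one_div_div _ _).symm
    rw [hwu]
    have h := aux_le hA (div_pos (hd0 u) (hd0 w)) (hrat u w).1 (hrat u w).2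
    linarith
  -- product-form expression for AG
  have hAG : AG G = (1/2) * ∑ p ∈ Finset.univ ×ˢ Finset.univ,
      (if G.Adj p.1 p.2 then
        (Real.sqrt (deg G p.1 / deg G p.2) + Real.sqrt (deg G p.2 / deg G p.1)) / 2 else 0) := by
    rw [Finset.sum_product]
    rfl
  -- edge count
  have hmcard : G.edgeFinset.card = m := by
    rw [← hm, Set.ncard_eq_toFinset_card']
    exact congrArg Finset.card (Set.toFinset_congr rfl)
  have hcount : ∑ p ∈ Finset.univ ×ˢ Finset.univ, (if G.Adj p.1 p.2 then (1:ℝ) else 0)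
      = 2 * (m:ℝ) := by
    rw [Finset.sum_product]
    have hstep : ∀ u : V, (∑ w : V, if G.Adj u w then (1:ℝ) else 0) = (G.degree u : ℝ) := by
      intro u
      have hfil : Finset.filter (fun w => G.Adj u w) Finset.univ = G.neighborFinset u := by
        ext w; simp [mem_neighborFinset]
      rw [Finset.sum_boole, hfil]
      rfl
    calc (∑ u : V, ∑ w : V, if G.Adj u w then (1:ℝ) else 0)
        = ∑ u : V, (G.degree u : ℝ) := Finset.sum_congr rfl (fun u _ => hstep u)
      _ = ((∑ u : V, G.degree u : ℕ) : ℝ) := by push_cast; ring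
      _ = ((2 * G.edgeFinset.card : ℕ) : ℝ) := by
          rw [G.sum_degrees_eq_twice_card_edges]
      _ = 2 * (m:ℝ) := by rw [hmcard]; push_cast; ring
  -- constant sum
  have hSbig : (1/2) * ∑ p ∈ Finset.univ ×ˢ Finset.univ,
      (if G.Adj p.1 p.2 then (Real.sqrt A + Real.sqrt (1/A))/2 else 0)
      = ((m:ℝ)/2) * (Real.sqrt A + Real.sqrt (1/A)) := by
    have hre : ∀ p : V × V, (if G.Adj p.1 p.2 then (Real.sqrt A + Real.sqrt (1/A))/2 else 0)
        = ((Real.sqrt A + Real.sqrt (1/A))/2) * (if G.Adj p.1 p.2 then (1:ℝ) else 0) := by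
      intro p; split_ifs <;> ring
    rw [Finset.sum_congr rfl (fun p _ => hre p), ← Finset.mul_sum, hcount]
    ring
  -- pointwise inequality on the product
  have hperm : ∀ p ∈ Finset.univ ×ˢ (Finset.univ : Finset V),
      (if G.Adj p.1 p.2 then
        (Real.sqrt (deg G p.1 / deg G p.2) + Real.sqrt (deg G p.2 / deg G p.1)) / 2 else 0)
      ≤ (if G.Adj p.1 p.2 then (Real.sqrt A + Real.sqrt (1/A))/2 else 0) := by
    intro p _
    split_ifs with h
    · exact hterm p.1 p.2
    · exact le_refl 0
  have hle : AG G ≤ ((m:ℝ)/2) * (Real.sqrt A + Real.sqrt (1/A)) := by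
    rw [hAG, ← hSbig]
    have := Finset.sum_le_sum hperm
    linarith
  refine ⟨hle, ?_, ?_⟩
  · -- equality → iso
    intro heq
    have hsum_eq : (∑ p ∈ Finset.univ ×ˢ Finset.univ,
        (if G.Adj p.1 p.2 then
          (Real.sqrt (deg G p.1 / deg G p.2) + Real.sqrt (deg G p.2 / deg G p.1)) / 2 else 0))
        = ∑ p ∈ Finset.univ ×ˢ Finset.univ,
          (if G.Adj p.1 p.2 then (Real.sqrt A + Real.sqrt (1/A))/2 else 0) := by
      rw [hAG] at heq
      rw [← hSbig] at heq
      linarith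
    have hpt := (Finset.sum_eq_sum_iff_of_le hperm).1 hsum_eq
    -- edge degree condition
    have hedge : ∀ u w : V, G.Adj u w →
        (ndeg G u = n - 1 ∧ ndeg G w = 2) ∨ (ndeg G u = 2 ∧ ndeg G w = n - 1) := by
      intro u w huw
      have hp := hpt (u, w) (Finset.mem_product.2 ⟨Finset.mem_univ u, Finset.mem_univ w⟩)
      simp only [if_pos huw] at hp
      have hwu : deg G w / deg G u = 1 / (deg G u / deg G w) := (one_div_div _ _).symm
      rw [hwu] at hp
      have heq2 : Real.sqrt (deg G u / deg G w) + Real.sqrt (1/(deg G u / deg G w))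
          = Real.sqrt A + Real.sqrt (1/A) := by linarith
      have hcast : ((n - 1 : ℕ) : ℝ) = (n:ℝ) - 1 := by
        rw [Nat.cast_sub (by omega : 1 ≤ n)]; norm_num
      rcases aux_eq hA (div_pos (hd0 u) (hd0 w)) heq2 with h | h
      · left
        rw [div_eq_iff (hd0 w).ne', hAdef] at h
        have hw2 : (0:ℝ) ≤ ((n:ℝ)-1) * (deg G w - 2) :=
          mul_nonneg hn1.le (by linarith [hdl w])
        have hx : deg G u = (n:ℝ) - 1 := by
          have := hdu u
          nlinarith [h, hw2]
        have hy : deg G w = 2 := by nlinarith [h, hx, hn1, hdl w]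
        constructor
        · have h' : (ndeg G u : ℝ) = ((n-1:ℕ):ℝ) := by rw [hcast]; exact hx
          exact_mod_cast h'
        · have h' := hy
          simp only [deg] at h'
          exact_mod_cast h'
      · right
        rw [← hinv, div_eq_div_iff (hd0 w).ne' hn1.ne'] at h
        have hu2 : (0:ℝ) ≤ ((n:ℝ)-1) * (deg G u - 2) :=
          mul_nonneg hn1.le (by linarith [hdl u])
        have hy : deg G w = (n:ℝ) - 1 := by
          have := hdu w
          nlinarith [h, hu2]
        have hx : deg G u = 2 := by nlinarith [h, hy, hn1, hdl u]
        constructor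
        · have h' := hx
          simp only [deg] at h'
          exact_mod_cast h'
        · have h' : (ndeg G w : ℝ) = ((n-1:ℕ):ℝ) := by rw [hcast]; exact hy
          exact_mod_cast h'
    -- adjacency-to-all from degree n-1
    have hall_of : ∀ a : V, ndeg G a = n - 1 → ∀ x, x ≠ a → G.Adj a x := by
      intro a ha x hx
      have hsub : G.neighborFinset a ⊆ Finset.univ.erase a := by
        intro y hy
        rw [Finset.mem_erase]
        exact ⟨((G.mem_neighborFinset a y).1 hy).ne', Finset.mem_univ y⟩
      have hcard : (Finset.univ.erase a).card ≤ (G.neighborFinset a).card := by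
        rw [Finset.card_erase_of_mem (Finset.mem_univ a), Finset.card_univ, hn]
        have hcc : (G.neighborFinset a).card = n - 1 := ha
        omega
      have heqf := Finset.eq_of_subset_of_card_le hsub hcard
      have hxm : x ∈ G.neighborFinset a := by
        rw [heqf, Finset.mem_erase]; exact ⟨hx, Finset.mem_univ x⟩
      exact (G.mem_neighborFinset a x).1 hxm
    -- n = 3
    have hn3' : n = 3 := by
      by_contra hne3
      have hn4 : 4 ≤ n := by omega
      obtain ⟨v⟩ := hne
      have hpos : 0 < G.degree v := by
        have := hδ v; rw [hndeg] at this; omega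
      obtain ⟨w, hvw⟩ := (G.degree_pos_iff_exists_adj v).1 hpos
      have hex : ∃ a : V, ndeg G a = n - 1 := by
        rcases hedge v w hvw with ⟨h1, _⟩ | ⟨_, h2⟩
        · exact ⟨v, h1⟩
        · exact ⟨w, h2⟩
      obtain ⟨a, ha⟩ := hex
      obtain ⟨b, hb⟩ := Fintype.exists_ne_of_one_lt_card (by rw [hn]; omega) a
      have hadjab : G.Adj a b := hall_of a ha b hb
      have hndb : ndeg G b = 2 := by
        rcases hedge a b hadjab with ⟨_, h2⟩ | ⟨h1, _⟩
        · exact h2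
        · omega
      have hba : a ∈ G.neighborFinset b := (G.mem_neighborFinset b a).2 hadjab.symm
      have hcard2 : ((G.neighborFinset b).erase a).card = 1 := by
        rw [Finset.card_erase_of_mem hba]
        have hcc : (G.neighborFinset b).card = 2 := hndb
        omega
      obtain ⟨c, hc⟩ := Finset.card_eq_one.1 hcard2
      have hc_mem : c ∈ (G.neighborFinset b).erase a := by
        rw [hc]; exact Finset.mem_singleton_self c
      have hca : c ≠ a := (Finset.mem_erase.1 hc_mem).1
      have hbc : G.Adj b c := (G.mem_neighborFinset b c).1 (Finset.mem_of_mem_erase hc_mem)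
      have hndc : ndeg G c = n - 1 := by
        rcases hedge b c hbc with ⟨h1, _⟩ | ⟨_, h2⟩
        · omega
        · exact h2
      have hndc2 : ndeg G c = 2 := by
        rcases hedge a c (hall_of a ha c hca) with ⟨_, h2⟩ | ⟨h1, _⟩
        · exact h2
        · omega
      omega
    -- G = ⊤
    have hcomplete : G = ⊤ := by
      ext u w
      simp only [top_adj]
      constructor
      · exact G.ne_of_adj
      · intro huw
        have hdn : ndeg G u = n - 1 := by
          have h1 := hδ u
          have h2 : ndeg G u < n := by rw [← hn, hndeg]; exact G.degree_lt_card_verts u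
          omega
        exact hall_of u hdn w (Ne.symm huw)
    have hcV : Fintype.card V = Fintype.card (Fin 3) := by
      rw [hn, hn3', Fintype.card_fin]
    exact ⟨by rw [hcomplete]; exact Iso.completeGraph (Fintype.equivOfCardEq hcV)⟩
  · -- iso → equality
    rintro ⟨φ⟩
    have hcV : Fintype.card V = 3 := by
      rw [Fintype.card_congr φ.toEquiv, Fintype.card_fin]
    have hn3' : n = 3 := by rw [← hn, hcV]
    have hdeg2 : ∀ v, ndeg G v = 2 := by
      intro v
      have h1 := hδ v
      have h2 : ndeg G v < n := by rw [← hn, hndeg]; exact G.degree_lt_card_verts v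
      omega
    have hA1 : A = 1 := by rw [hAdef, hn3']; norm_num
    rw [hAG, ← hSbig]
    congr 1
    apply Finset.sum_congr rfl
    intro p _
    split_ifs with h
    · have h1 : deg G p.1 = 2 := by rw [deg, hdeg2]; norm_num
      have h2 : deg G p.2 = 2 := by rw [deg, hdeg2]; norm_num
      rw [h1, h2, hA1]
      norm_num
    · rfl
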